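/- arXiv:1602.03992 — 2 statements merged into one kernel-verified Lean document; each statement's English description precedes it below -/
import Mathlib

section
/- Let 0 < p ≤ 1, 0 < ε, integers m ≥ q ≥ 1, S a real symmetric positive semidefinite m×m matrix, D a q×q diagonal matrix with nonnegative diagonal entries, nonnegative reals ρ₁,…,ρ_q, and U₀ ∈ St(m,q). Define f(U) = Tr(UᵀSUD) − Σ_{j=1}^q ρ_j Σ_{i=1}^m g_p^ε(U_{ij}), G = S U₀ D, weights w_{ij} = w((U₀)_{ij}; ρ_j), w_max,j = max_{1≤i≤m} w_{ij}, and H_{ij} = (w_{ij} − w_max,j)(U₀)_{ij}. Then for every U ∈ St(m,q), f(U) − 2·Tr((G − H)ᵀU) ≥ f(U₀) − 2·Tr((G − H)ᵀU₀); that is, up to an additive constant, 2·Tr((G − H)ᵀU) is a global minorant of f on the Stiefel manifold that is tight at U = U₀. -/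
open Matrix

/-- The smoothed ℓ₀ surrogate `g_p^ε`. -/
noncomputable def gpe (p ε x : ℝ) : ℝ :=
  if |x| ≤ ε then x ^ 2 / (2 * ε * (p + ε) * Real.log (1 + 1 / p))
  else (Real.log ((p + |x|) / (p + ε)) + ε / (2 * (p + ε))) / Real.log (1 + 1 / p)

/-- The majorization weight `w(x₀; ρ)`. -/
noncomputable def wgt (p ε ρ x₀ : ℝ) : ℝ :=
  if |x₀| ≤ ε then ρ / (2 * ε * (p + ε) * Real.log (1 + 1 / p))
  else ρ / (2 * Real.log (1 + 1 / p) * |x₀| * (|x₀| + p))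

lemma gpe_le (p ε : ℝ) (hp : 0 < p) (hε : 0 < ε) (x₀ x : ℝ) :
    gpe p ε x ≤ gpe p ε x₀ + wgt p ε 1 x₀ * (x ^ 2 - x₀ ^ 2) := by
  have hL : 0 < Real.log (1 + 1 / p) :=
    Real.log_pos (by have := one_div_pos.mpr hp; linarith)
  have ht : 0 ≤ |x| := abs_nonneg x
  have ht₀ : 0 ≤ |x₀| := abs_nonneg x₀
  unfold gpe wgt
  rw [← sq_abs x, ← sq_abs x₀]
  have hLne : Real.log (1 + 1 / p) ≠ 0 := ne_of_gt hL
  have hεne : ε ≠ 0 := ne_of_gt hε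
  have hpεne : p + ε ≠ 0 := by positivity
  set L := Real.log (1 + 1 / p) with hLdef
  set t := |x| with htdef
  set t₀ := |x₀| with ht₀def
  split_ifs with h1 h2 h2
  · exact le_of_eq (by ring)
  · -- t ≤ ε < t₀
    push_neg at h2
    have ht₀pos : 0 < t₀ := lt_trans hε h2
    have hlog : (t₀ - ε) / (p + t₀) ≤ Real.log ((p + t₀) / (p + ε)) := by
      have h := Real.log_le_sub_one_of_pos (show 0 < (p + ε) / (p + t₀) by positivity)
      rw [Real.log_div (by positivity) (by positivity)] at h
      rw [Real.log_div (by positivity) (by positivity)]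
      have e : (t₀ - ε) / (p + t₀) = 1 - (p + ε) / (p + t₀) := by
        field_simp
        ring
      linarith [e ▸ le_refl ((t₀ - ε) / (p + t₀))]
    have hmain : t ^ 2 / (2 * ε * (p + ε)) ≤
        Real.log ((p + t₀) / (p + ε)) + ε / (2 * (p + ε)) + (t ^ 2 - t₀ ^ 2) / (2 * t₀ * (t₀ + p)) := by
      have hbr : (t₀ - ε) / (p + t₀) + ε / (2 * (p + ε)) + (t ^ 2 - t₀ ^ 2) / (2 * t₀ * (t₀ + p))
          - t ^ 2 / (2 * ε * (p + ε))
          = ((t₀ - ε) * (t₀ + ε + p) * (ε ^ 2 - t ^ 2) + ε * (p + ε) * (t₀ - ε) ^ 2)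
            / (2 * ε * (p + ε) * t₀ * (p + t₀)) := by
        field_simp
        ring
      have hnum : 0 ≤ (t₀ - ε) * (t₀ + ε + p) * (ε ^ 2 - t ^ 2) + ε * (p + ε) * (t₀ - ε) ^ 2 := by
        have h1' : 0 ≤ ε ^ 2 - t ^ 2 := by nlinarith
        have h2' : 0 ≤ t₀ - ε := by linarith
        have hA := mul_nonneg (mul_nonneg h2' (by linarith : (0:ℝ) ≤ t₀ + ε + p)) h1'
        have hB := mul_nonneg (mul_nonneg hε.le (by linarith : (0:ℝ) ≤ p + ε)) (sq_nonneg (t₀ - ε))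
        linarith
      have := div_nonneg hnum (by positivity : (0:ℝ) ≤ 2 * ε * (p + ε) * t₀ * (p + t₀))
      linarith [hbr ▸ this]
    have ht₀ne : t₀ ≠ 0 := ne_of_gt ht₀pos
    have ht₀pne : t₀ + p ≠ 0 := by positivity
    calc t ^ 2 / (2 * ε * (p + ε) * L) = (t ^ 2 / (2 * ε * (p + ε))) / L := by
          field_simp
      _ ≤ (Real.log ((p + t₀) / (p + ε)) + ε / (2 * (p + ε)) + (t ^ 2 - t₀ ^ 2) / (2 * t₀ * (t₀ + p))) / L := by
          gcongr
      _ = (Real.log ((p + t₀) / (p + ε)) + ε / (2 * (p + ε))) / L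
            + 1 / (2 * L * t₀ * (t₀ + p)) * (t ^ 2 - t₀ ^ 2) := by
          field_simp
  · -- ε < t, t₀ ≤ ε
    push_neg at h1
    have hlog : Real.log ((p + t) / (p + ε)) ≤ (t - ε) / (p + ε) := by
      have h := Real.log_le_sub_one_of_pos (show 0 < (p + t) / (p + ε) by positivity)
      have e : (p + t) / (p + ε) - 1 = (t - ε) / (p + ε) := by field_simp; ring
      linarith [e ▸ h]
    have hmain : Real.log ((p + t) / (p + ε)) + ε / (2 * (p + ε)) ≤ t ^ 2 / (2 * ε * (p + ε)) := by
      have hbr : t ^ 2 / (2 * ε * (p + ε)) - ε / (2 * (p + ε)) - (t - ε) / (p + ε)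
          = (t - ε) ^ 2 / (2 * ε * (p + ε)) := by
        field_simp
        ring
      have := div_nonneg (sq_nonneg (t - ε)) (by positivity : (0:ℝ) ≤ 2 * ε * (p + ε))
      linarith [hbr ▸ this]
    calc (Real.log ((p + t) / (p + ε)) + ε / (2 * (p + ε))) / L
        ≤ (t ^ 2 / (2 * ε * (p + ε))) / L := by gcongr
      _ = t₀ ^ 2 / (2 * ε * (p + ε) * L) + 1 / (2 * ε * (p + ε) * L) * (t ^ 2 - t₀ ^ 2) := by
          field_simp
          ring
  · -- both > ε
    push_neg at h1 h2
    have ht₀pos : 0 < t₀ := lt_trans hε h2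
    have ht₀ne : t₀ ≠ 0 := ne_of_gt ht₀pos
    have ht₀pne : t₀ + p ≠ 0 := by positivity
    have hlog : Real.log (p + t) - Real.log (p + t₀) ≤ (t - t₀) / (p + t₀) := by
      have h := Real.log_le_sub_one_of_pos (show 0 < (p + t) / (p + t₀) by positivity)
      rw [Real.log_div (by positivity) (by positivity)] at h
      have e : (p + t) / (p + t₀) - 1 = (t - t₀) / (p + t₀) := by field_simp; ring
      linarith [e ▸ h]
    have hbr : (t ^ 2 - t₀ ^ 2) / (2 * t₀ * (t₀ + p)) - (t - t₀) / (p + t₀)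
        = (t - t₀) ^ 2 / (2 * t₀ * (t₀ + p)) := by
      field_simp
      ring
    have hsq := div_nonneg (sq_nonneg (t - t₀)) (by positivity : (0:ℝ) ≤ 2 * t₀ * (t₀ + p))
    have hmain : Real.log ((p + t) / (p + ε)) + ε / (2 * (p + ε)) ≤
        Real.log ((p + t₀) / (p + ε)) + ε / (2 * (p + ε)) + (t ^ 2 - t₀ ^ 2) / (2 * t₀ * (t₀ + p)) := by
      rw [Real.log_div (by positivity) (by positivity), Real.log_div (by positivity) (by positivity)]
      linarith [hbr ▸ hsq]
    calc (Real.log ((p + t) / (p + ε)) + ε / (2 * (p + ε))) / L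
        ≤ (Real.log ((p + t₀) / (p + ε)) + ε / (2 * (p + ε)) + (t ^ 2 - t₀ ^ 2) / (2 * t₀ * (t₀ + p))) / L := by
          gcongr
      _ = (Real.log ((p + t₀) / (p + ε)) + ε / (2 * (p + ε))) / L
            + 1 / (2 * L * t₀ * (t₀ + p)) * (t ^ 2 - t₀ ^ 2) := by
          field_simp

lemma wgt_scale (p ε ρ x₀ : ℝ) : wgt p ε ρ x₀ = ρ * wgt p ε 1 x₀ := by
  unfold wgt; split_ifs <;> ring

theorem stmt5 (p ε : ℝ) (hp : 0 < p) (hp1 : p ≤ 1) (hε : 0 < ε)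
    (m q : ℕ) (hq : 1 ≤ q) (hqm : q ≤ m)
    (S : Matrix (Fin m) (Fin m) ℝ) (hS : S.PosSemidef)
    (d : Fin q → ℝ) (hd : ∀ i, 0 ≤ d i)
    (ρ : Fin q → ℝ) (hρ : ∀ j, 0 ≤ ρ j)
    (U₀ : Matrix (Fin m) (Fin q) ℝ) (hU₀ : U₀ᵀ * U₀ = 1)
    (G H : Matrix (Fin m) (Fin q) ℝ)
    (hG : G = S * U₀ * Matrix.diagonal d)
    (hH : H = Matrix.of fun i j =>
      (wgt p ε (ρ j) (U₀ i j) - ⨆ i' : Fin m, wgt p ε (ρ j) (U₀ i' j)) * U₀ i j) :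
    ∀ U : Matrix (Fin m) (Fin q) ℝ, Uᵀ * U = 1 →
      (Matrix.trace (U₀ᵀ * S * U₀ * Matrix.diagonal d)
          - ∑ j, ρ j * ∑ i, gpe p ε (U₀ i j)) - 2 * Matrix.trace ((G - H)ᵀ * U₀)
      ≤ (Matrix.trace (Uᵀ * S * U * Matrix.diagonal d)
          - ∑ j, ρ j * ∑ i, gpe p ε (U i j)) - 2 * Matrix.trace ((G - H)ᵀ * U) := by
  intro U hU
  have hSsymm : Sᵀ = S := hS.1
  -- column norms
  have hcol : ∀ (V : Matrix (Fin m) (Fin q) ℝ), Vᵀ * V = 1 → ∀ j, ∑ i, V i j ^ 2 = 1 := by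
    intro V hV j
    have h := congrFun (congrFun hV j) j
    simpa [Matrix.mul_apply, Matrix.one_apply, sq] using h
  -- quadratic form nonnegativity
  have hquad : ∀ A : Matrix (Fin m) (Fin q) ℝ,
      0 ≤ Matrix.trace (Aᵀ * S * A * Matrix.diagonal d) := by
    intro A
    have htr : Matrix.trace (Aᵀ * S * A * Matrix.diagonal d) = ∑ j, (Aᵀ * S * A) j j * d j := by
      simp [Matrix.trace, Matrix.diag, Matrix.mul_diagonal]
    rw [htr]
    apply Finset.sum_nonneg; intro j _
    apply mul_nonneg _ (hd j)
    have h := hS.dotProduct_mulVec_nonneg (fun i => A i j)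
    have e : (Aᵀ * S * A) j j = star (fun i => A i j) ⬝ᵥ S.mulVec (fun i => A i j) := by
      simp [Matrix.mul_apply, dotProduct, Matrix.mulVec, Finset.mul_sum, Finset.sum_mul]
      rw [Finset.sum_comm]
      apply Finset.sum_congr rfl; intro i _
      apply Finset.sum_congr rfl; intro k _
      ring
    rw [e]; exact h
  -- cross trace identities
  have cross1 : ∀ V : Matrix (Fin m) (Fin q) ℝ,
      Matrix.trace (U₀ᵀ * S * V * Matrix.diagonal d) = Matrix.trace (Gᵀ * V) := by
    intro V
    rw [hG]
    have e : (S * U₀ * Matrix.diagonal d)ᵀ * V = Matrix.diagonal d * (U₀ᵀ * S * V) := by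
      rw [Matrix.transpose_mul, Matrix.transpose_mul, Matrix.diagonal_transpose, hSsymm]
      simp [Matrix.mul_assoc]
    rw [e, Matrix.trace_mul_comm]
  have cross2 : ∀ V : Matrix (Fin m) (Fin q) ℝ,
      Matrix.trace (Vᵀ * S * U₀ * Matrix.diagonal d) = Matrix.trace (Gᵀ * V) := by
    intro V
    rw [← Matrix.trace_transpose (Vᵀ * S * U₀ * Matrix.diagonal d)]
    have e : (Vᵀ * S * U₀ * Matrix.diagonal d)ᵀ = Gᵀ * V := by
      rw [hG]
      simp [Matrix.transpose_mul, Matrix.diagonal_transpose, hSsymm, Matrix.mul_assoc]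
    rw [e]
  -- expansion of the quadratic form at U - U₀
  have hexp : Matrix.trace ((U - U₀)ᵀ * S * (U - U₀) * Matrix.diagonal d)
      = Matrix.trace (Uᵀ * S * U * Matrix.diagonal d) - Matrix.trace (Uᵀ * S * U₀ * Matrix.diagonal d)
        - Matrix.trace (U₀ᵀ * S * U * Matrix.diagonal d)
        + Matrix.trace (U₀ᵀ * S * U₀ * Matrix.diagonal d) := by
    simp only [Matrix.transpose_sub, Matrix.sub_mul, Matrix.mul_sub, Matrix.trace_sub]
    ring
  have hQ0 : Matrix.trace (U₀ᵀ * S * U₀ * Matrix.diagonal d) = Matrix.trace (Gᵀ * U₀) := cross1 U₀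
  have quad : Matrix.trace (U₀ᵀ * S * U₀ * Matrix.diagonal d)
        - Matrix.trace (Uᵀ * S * U * Matrix.diagonal d)
      ≤ 2 * Matrix.trace (Gᵀ * U₀) - 2 * Matrix.trace (Gᵀ * U) := by
    have h := hquad (U - U₀)
    rw [hexp, cross1 U, cross2 U] at h
    linarith
  -- the supremum weights
  set wm : Fin q → ℝ := fun j => ⨆ i' : Fin m, wgt p ε (ρ j) (U₀ i' j) with hwm_def
  have hwm : ∀ i j, wgt p ε (ρ j) (U₀ i j) ≤ wm j := by
    intro i j
    exact le_ciSup (f := fun i' : Fin m => wgt p ε (ρ j) (U₀ i' j))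
      (Set.Finite.bddAbove (Set.finite_range _)) i
  -- entrywise key inequality
  have hkey : ∀ i j, ρ j * gpe p ε (U i j) ≤ ρ j * gpe p ε (U₀ i j)
      + wm j * ((U i j) ^ 2 - (U₀ i j) ^ 2) + 2 * H i j * (U i j - U₀ i j) := by
    intro i j
    have h1 := gpe_le p ε hp hε (U₀ i j) (U i j)
    have h1' : ρ j * gpe p ε (U i j) ≤ ρ j * gpe p ε (U₀ i j)
        + wgt p ε (ρ j) (U₀ i j) * ((U i j) ^ 2 - (U₀ i j) ^ 2) := by
      rw [wgt_scale]
      have h2 := mul_le_mul_of_nonneg_left h1 (hρ j)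
      nlinarith [h2]
    have hH' : H i j = (wgt p ε (ρ j) (U₀ i j) - wm j) * U₀ i j := by
      rw [hH]; rfl
    rw [hH']
    nlinarith [mul_nonneg (sub_nonneg.mpr (hwm i j)) (sq_nonneg (U i j - U₀ i j)), h1']
  -- column-wise sum
  have hsumj : ∀ j, ∑ i, ρ j * gpe p ε (U i j) ≤ ∑ i, ρ j * gpe p ε (U₀ i j)
      + (2 * ∑ i, H i j * U i j - 2 * ∑ i, H i j * U₀ i j) := by
    intro j
    have e1 : ∑ i, (U i j) ^ 2 = 1 := hcol U hU j
    have e0 : ∑ i, (U₀ i j) ^ 2 = 1 := hcol U₀ hU₀ j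
    calc ∑ i, ρ j * gpe p ε (U i j)
        ≤ ∑ i, (ρ j * gpe p ε (U₀ i j) + wm j * ((U i j) ^ 2 - (U₀ i j) ^ 2)
            + 2 * H i j * (U i j - U₀ i j)) := Finset.sum_le_sum (fun i _ => hkey i j)
      _ = ∑ i, ρ j * gpe p ε (U₀ i j) + wm j * ((∑ i, (U i j) ^ 2) - ∑ i, (U₀ i j) ^ 2)
            + (2 * ∑ i, H i j * U i j - 2 * ∑ i, H i j * U₀ i j) := by
          rw [Finset.sum_add_distrib, Finset.sum_add_distrib]
          congr 1
          · congr 1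
            rw [← Finset.mul_sum, Finset.sum_sub_distrib]
          · rw [Finset.mul_sum, Finset.mul_sum, ← Finset.sum_sub_distrib]
            apply Finset.sum_congr rfl; intro i _
            ring
      _ = ∑ i, ρ j * gpe p ε (U₀ i j)
            + (2 * ∑ i, H i j * U i j - 2 * ∑ i, H i j * U₀ i j) := by
          rw [e1, e0]; ring
  -- total surrogate bound
  have hsurr : ∑ j, ρ j * ∑ i, gpe p ε (U i j) ≤ (∑ j, ρ j * ∑ i, gpe p ε (U₀ i j))
      + (2 * ∑ j, ∑ i, H i j * U i j - 2 * ∑ j, ∑ i, H i j * U₀ i j) := by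
    calc ∑ j, ρ j * ∑ i, gpe p ε (U i j) = ∑ j, ∑ i, ρ j * gpe p ε (U i j) := by
          simp [Finset.mul_sum]
      _ ≤ ∑ j, (∑ i, ρ j * gpe p ε (U₀ i j)
            + (2 * ∑ i, H i j * U i j - 2 * ∑ i, H i j * U₀ i j)) :=
          Finset.sum_le_sum (fun j _ => hsumj j)
      _ = (∑ j, ρ j * ∑ i, gpe p ε (U₀ i j))
            + (2 * ∑ j, ∑ i, H i j * U i j - 2 * ∑ j, ∑ i, H i j * U₀ i j) := by
          rw [Finset.sum_add_distrib, Finset.sum_sub_distrib, ← Finset.mul_sum, ← Finset.mul_sum]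
          simp [Finset.mul_sum]
  -- trace of Hᵀ V as a sum
  have htrH : ∀ V : Matrix (Fin m) (Fin q) ℝ,
      Matrix.trace (Hᵀ * V) = ∑ j, ∑ i, H i j * V i j := by
    intro V; simp [Matrix.trace, Matrix.diag, Matrix.mul_apply]
  have hGH : ∀ V : Matrix (Fin m) (Fin q) ℝ, Matrix.trace ((G - H)ᵀ * V)
      = Matrix.trace (Gᵀ * V) - ∑ j, ∑ i, H i j * V i j := by
    intro V
    rw [Matrix.transpose_sub, Matrix.sub_mul, Matrix.trace_sub, htrH V]
  rw [hGH U, hGH U₀]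
  linarith [quad, hsurr]
end

section
/- Let z ∈ ℝ^m have all entries positive, let 1 ≤ q < m, let r ≥ 0, and let C ⊆ {q+1,…,m} be nonempty. Assume: z_{q−r−1} > z_{q−r} (if q−r > 1); z_{q−i} ≤ z_{q−i+1} for i = 1,…,r; z_q ≤ z_c for every c ∈ C, with at least one of the inequalities in the last two groups strict; and z_q > z_j for every j ∈ {q+1,…,m} \ C. Let λ* be the unique minimizer of F_z over Λ_{q,m}. Then λ*_{q−r} = λ*_{q−r+1} = … = λ*_q, and moreover λ*_q = λ*_{c*}, where c* ∈ C is an index attaining the maximal value of z over C. -/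
/-- one-sided minimality from the right implies derivative ≥ 0, i.e. `1 ≤ c * x0`. -/
lemma phi_right (c x0 ε : ℝ) (hx : 0 < x0) (hε : 0 < ε)
    (H : ∀ t, x0 < t → t < x0 + ε → -(Real.log x0) + c * x0 ≤ -(Real.log t) + c * t) :
    1 ≤ c * x0 := by
  by_contra hlt
  push_neg at hlt
  have habs : (0:ℝ) ≤ |c| := abs_nonneg c
  have hca : c ≤ |c| := le_abs_self c
  set δ : ℝ := min (ε/2) ((1 - c*x0)/(2*(|c|+1))) with hδdef
  have hδpos : 0 < δ := lt_min (by linarith) (div_pos (by linarith) (by linarith))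
  have hδle : δ ≤ (1 - c*x0)/(2*(|c|+1)) := min_le_right _ _
  set T : ℝ := x0 + δ with hTdef
  have hT1 : x0 < T := by simp only [hTdef]; linarith
  have hTε : T < x0 + ε := by
    have : δ ≤ ε/2 := min_le_left _ _
    simp only [hTdef]; linarith
  have hkey : ∀ x, x0 ≤ x → x ≤ T → c * x < 1 := by
    intro x hx1 hx2
    have h2 : 0 ≤ x - x0 := by linarith
    have h3 : c * (x - x0) ≤ |c| * (x - x0) := mul_le_mul_of_nonneg_right hca h2
    have h4 : |c| * (x - x0) ≤ |c| * δ := by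
      apply mul_le_mul_of_nonneg_left _ habs
      simp only [hTdef] at hx2; linarith
    have h5 : |c| * δ ≤ |c| * ((1 - c*x0)/(2*(|c|+1))) :=
      mul_le_mul_of_nonneg_left hδle habs
    have h6 : |c| * ((1 - c*x0)/(2*(|c|+1))) ≤ (|c|+1) * ((1 - c*x0)/(2*(|c|+1))) := by
      apply mul_le_mul_of_nonneg_right (by linarith)
      exact le_of_lt (div_pos (by linarith) (by linarith))
    have h7 : (|c|+1) * ((1 - c*x0)/(2*(|c|+1))) = (1 - c*x0)/2 := by
      field_simp
    nlinarith
  have hanti : StrictAntiOn (fun x => -(Real.log x) + c * x) (Set.Icc x0 T) := by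
    apply strictAntiOn_of_deriv_neg (convex_Icc _ _)
    · apply ContinuousOn.add
      · apply ContinuousOn.neg
        apply Real.continuousOn_log.mono
        intro x hx'
        simp only [Set.mem_compl_iff, Set.mem_singleton_iff]
        exact ne_of_gt (lt_of_lt_of_le hx hx'.1)
      · exact (continuous_const.mul continuous_id).continuousOn
    · intro x hx'
      rw [interior_Icc] at hx'
      have hx0 : 0 < x := lt_trans hx hx'.1
      have hd : HasDerivAt (fun x => -(Real.log x) + c * x) (-x⁻¹ + c) x := by
        have h1 := (Real.hasDerivAt_log (ne_of_gt hx0)).neg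
        have h2 : HasDerivAt (fun x => c * x) c x := by
          simpa using (hasDerivAt_id x).const_mul c
        exact h1.add h2
      rw [hd.deriv]
      have h6 : c * x < 1 := hkey x hx'.1.le hx'.2.le
      have h7 : x * x⁻¹ = 1 := mul_inv_cancel₀ (ne_of_gt hx0)
      nlinarith
  have h8 : -(Real.log T) + c * T < -(Real.log x0) + c * x0 :=
    hanti (Set.left_mem_Icc.mpr hT1.le) (Set.right_mem_Icc.mpr hT1.le) hT1
  have h9 := H T hT1 hTε
  linarith

/-- one-sided minimality from the left implies derivative ≤ 0, i.e. `c * x0 ≤ 1`. -/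
lemma phi_left (c x0 ε : ℝ) (hx : 0 < x0) (hε : 0 < ε)
    (H : ∀ t, x0 - ε < t → t < x0 → -(Real.log x0) + c * x0 ≤ -(Real.log t) + c * t) :
    c * x0 ≤ 1 := by
  by_contra hlt
  push_neg at hlt
  have habs : (0:ℝ) ≤ |c| := abs_nonneg c
  have hca : c ≤ |c| := le_abs_self c
  set δ : ℝ := min (ε/2) ((c*x0 - 1)/(2*(|c|+1))) with hδdef
  have hδpos : 0 < δ := lt_min (by linarith) (div_pos (by linarith) (by linarith))
  have hδle : δ ≤ (c*x0 - 1)/(2*(|c|+1)) := min_le_right _ _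
  have hδx0 : δ < x0 := by
    have h1 : (c*x0 - 1)/(2*(|c|+1)) < x0 := by
      rw [div_lt_iff₀ (by linarith)]
      nlinarith
    linarith [min_le_right (ε/2) ((c*x0 - 1)/(2*(|c|+1)))]
  set T : ℝ := x0 - δ with hTdef
  have hTpos : 0 < T := by simp only [hTdef]; linarith
  have hT1 : T < x0 := by simp only [hTdef]; linarith
  have hTε : x0 - ε < T := by
    have : δ ≤ ε/2 := min_le_left _ _
    simp only [hTdef]; linarith
  have hkey : ∀ x, T ≤ x → x ≤ x0 → 1 < c * x := by
    intro x hx1 hx2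
    have h2 : 0 ≤ x0 - x := by linarith
    have h3 : c * (x0 - x) ≤ |c| * (x0 - x) := mul_le_mul_of_nonneg_right hca h2
    have h4 : |c| * (x0 - x) ≤ |c| * δ := by
      apply mul_le_mul_of_nonneg_left _ habs
      simp only [hTdef] at hx1; linarith
    have h5 : |c| * δ ≤ |c| * ((c*x0 - 1)/(2*(|c|+1))) :=
      mul_le_mul_of_nonneg_left hδle habs
    have h6 : |c| * ((c*x0 - 1)/(2*(|c|+1))) ≤ (|c|+1) * ((c*x0 - 1)/(2*(|c|+1))) := by
      apply mul_le_mul_of_nonneg_right (by linarith)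
      exact le_of_lt (div_pos (by linarith) (by linarith))
    have h7 : (|c|+1) * ((c*x0 - 1)/(2*(|c|+1))) = (c*x0 - 1)/2 := by
      field_simp
    nlinarith
  have hmono : StrictMonoOn (fun x => -(Real.log x) + c * x) (Set.Icc T x0) := by
    apply strictMonoOn_of_deriv_pos (convex_Icc _ _)
    · apply ContinuousOn.add
      · apply ContinuousOn.neg
        apply Real.continuousOn_log.mono
        intro x hx'
        simp only [Set.mem_compl_iff, Set.mem_singleton_iff]
        exact ne_of_gt (lt_of_lt_of_le hTpos hx'.1)
      · exact (continuous_const.mul continuous_id).continuousOn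
    · intro x hx'
      rw [interior_Icc] at hx'
      have hx0 : 0 < x := lt_trans hTpos hx'.1
      have hd : HasDerivAt (fun x => -(Real.log x) + c * x) (-x⁻¹ + c) x := by
        have h1 := (Real.hasDerivAt_log (ne_of_gt hx0)).neg
        have h2 : HasDerivAt (fun x => c * x) c x := by
          simpa using (hasDerivAt_id x).const_mul c
        exact h1.add h2
      rw [hd.deriv]
      have h6 : 1 < c * x := hkey x hx'.1.le hx'.2.le
      have h7 : x * x⁻¹ = 1 := mul_inv_cancel₀ (ne_of_gt hx0)
      nlinarith
  have h8 : -(Real.log T) + c * T < -(Real.log x0) + c * x0 :=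
    hmono (Set.left_mem_Icc.mpr hT1.le) (Set.right_mem_Icc.mpr hT1.le) hT1
  have h9 := H T hTε hT1
  linarith




/-- The objective `F_z(λ) = Σ_{i=1}^m (−log λ_i + z_i λ_i)` (indices 1,…,m). -/
noncomputable def Fobj (m : ℕ) (z lam : ℕ → ℝ) : ℝ :=
  ∑ i ∈ Finset.Icc 1 m, (-(Real.log (lam i)) + z i * lam i)

/-- The feasible set `Λ_{q,m}`: positive entries, `λ_i ≤ λ_{i+1}` for `i = 1,…,q−1`,
and `λ_q ≤ λ_j` for `j = q+1,…,m`. -/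
def Feas (q m : ℕ) (lam : ℕ → ℝ) : Prop :=
  (∀ i ∈ Finset.Icc 1 m, 0 < lam i) ∧
  (∀ i, 1 ≤ i → i + 1 ≤ q → lam i ≤ lam (i + 1)) ∧
  (∀ j, q < j → j ≤ m → lam q ≤ lam j)


lemma Fobj_update (m : ℕ) (z lam : ℕ → ℝ) (k : ℕ) (hk : k ∈ Finset.Icc 1 m) (x : ℝ) :
    Fobj m z (Function.update lam k x) - Fobj m z lam
      = (-(Real.log x) + z k * x) - (-(Real.log (lam k)) + z k * lam k) := by
  unfold Fobj
  rw [← Finset.sum_erase_add _ _ hk, ← Finset.sum_erase_add _ (fun i => -(Real.log (lam i)) + z i * lam i) hk]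
  have h : ∑ i ∈ (Finset.Icc 1 m).erase k,
      (-(Real.log (Function.update lam k x i)) + z i * Function.update lam k x i)
      = ∑ i ∈ (Finset.Icc 1 m).erase k, (-(Real.log (lam i)) + z i * lam i) := by
    refine Finset.sum_congr rfl fun i hi => ?_
    rw [Function.update_of_ne (Finset.ne_of_mem_erase hi)]
  rw [h, Function.update_self]
  ring

lemma min_right (m q : ℕ) (z lam : ℕ → ℝ)
    (hmin : ∀ mu : ℕ → ℝ, Feas q m mu → Fobj m z lam ≤ Fobj m z mu)
    (k : ℕ) (hk : k ∈ Finset.Icc 1 m) (hlk : 0 < lam k) (ε : ℝ) (hε : 0 < ε)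
    (hf : ∀ t, lam k < t → t < lam k + ε → Feas q m (Function.update lam k t)) :
    1 ≤ z k * lam k := by
  apply phi_right (z k) (lam k) ε hlk hε
  intro t ht1 ht2
  have h1 := hmin _ (hf t ht1 ht2)
  have h2 := Fobj_update m z lam k hk t
  linarith

lemma min_left (m q : ℕ) (z lam : ℕ → ℝ)
    (hmin : ∀ mu : ℕ → ℝ, Feas q m mu → Fobj m z lam ≤ Fobj m z mu)
    (k : ℕ) (hk : k ∈ Finset.Icc 1 m) (hlk : 0 < lam k) (ε : ℝ) (hε : 0 < ε)
    (hf : ∀ t, lam k - ε < t → t < lam k → Feas q m (Function.update lam k t)) :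
    z k * lam k ≤ 1 := by
  apply phi_left (z k) (lam k) ε hlk hε
  intro t ht1 ht2
  have h1 := hmin _ (hf t ht1 ht2)
  have h2 := Fobj_update m z lam k hk t
  linarith

theorem stmt12 (m q : ℕ) (hq : 1 ≤ q) (hqm : q < m) (z : ℕ → ℝ)
    (hz : ∀ i ∈ Finset.Icc 1 m, 0 < z i)
    (r : ℕ) (hr : r < q)
    (C : Finset ℕ) (hC : C.Nonempty) (hCsub : C ⊆ Finset.Icc (q + 1) m)
    (hleft : 1 < q - r → z (q - r) < z (q - r - 1))
    (hord : ∀ i, 1 ≤ i → i ≤ r → z (q - i) ≤ z (q - i + 1))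
    (hCineq : ∀ c ∈ C, z q ≤ z c)
    (hstrict : (∃ i, 1 ≤ i ∧ i ≤ r ∧ z (q - i) < z (q - i + 1)) ∨ ∃ c ∈ C, z q < z c)
    (houtside : ∀ j', q < j' → j' ≤ m → j' ∉ C → z j' < z q)
    (lam : ℕ → ℝ) (hfeas : Feas q m lam)
    (hmin : ∀ mu : ℕ → ℝ, Feas q m mu → Fobj m z lam ≤ Fobj m z mu) :
    (∀ i, q - r ≤ i → i ≤ q → lam i = lam q) ∧
    (∀ c ∈ C, (∀ c' ∈ C, z c' ≤ z c) → lam q = lam c) := by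
  obtain ⟨hpos, hmono, htail⟩ := hfeas
  have hmemq : q ∈ Finset.Icc 1 m := Finset.mem_Icc.mpr ⟨hq, le_of_lt hqm⟩
  have hlamq : 0 < lam q := hpos q hmemq
  -- Step lemma: adjacent equality inside the block [q-r, q]
  have step : ∀ a, q - r ≤ a → a < q → lam a = lam (a + 1) := by
    intro a hge hlt
    have ha1 : 1 ≤ a := by omega
    have hmema : a ∈ Finset.Icc 1 m := Finset.mem_Icc.mpr ⟨ha1, by omega⟩
    have hmema1 : a + 1 ∈ Finset.Icc 1 m := Finset.mem_Icc.mpr ⟨by omega, by omega⟩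
    have hle : lam a ≤ lam (a + 1) := hmono a ha1 (by omega)
    by_contra hne
    have hlt2 : lam a < lam (a + 1) := lt_of_le_of_ne hle hne
    have hposa : 0 < lam a := hpos a hmema
    -- push a up
    have hA : 1 ≤ z a * lam a := by
      apply min_right m q z lam hmin a hmema hposa (lam (a+1) - lam a) (by linarith)
      intro t ht1 ht2
      refine ⟨?_, ?_, ?_⟩
      · intro i hi
        by_cases h : i = a
        · subst h; rw [Function.update_self]; linarith
        · rw [Function.update_of_ne h]; exact hpos i hi
      · intro i hi1 hi2
        by_cases h1 : i = a
        · subst h1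
          rw [Function.update_self, Function.update_of_ne (by omega)]
          linarith
        · by_cases h2 : i + 1 = a
          · rw [Function.update_of_ne h1, h2, Function.update_self]
            have h3 : lam i ≤ lam a := by
              rw [← h2]; exact hmono i hi1 (by omega)
            linarith
          · rw [Function.update_of_ne h1, Function.update_of_ne h2]
            exact hmono i hi1 hi2
      · intro j hj1 hj2
        rw [Function.update_of_ne (by omega : q ≠ a), Function.update_of_ne (by omega : j ≠ a)]
        exact htail j hj1 hj2
    -- push a+1 down
    have hB : z (a + 1) * lam (a + 1) ≤ 1 := by
      apply min_left m q z lam hmin (a+1) hmema1 (hpos _ hmema1) (lam (a+1) - lam a) (by linarith)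
      intro t ht1 ht2
      have ht1' : lam a < t := by linarith
      refine ⟨?_, ?_, ?_⟩
      · intro i hi
        by_cases h : i = a + 1
        · subst h; rw [Function.update_self]; linarith
        · rw [Function.update_of_ne h]; exact hpos i hi
      · intro i hi1 hi2
        by_cases h1 : i = a + 1
        · subst h1
          rw [Function.update_self, Function.update_of_ne (by omega)]
          have h3 : lam (a + 1) ≤ lam (a + 1 + 1) := hmono (a+1) (by omega) hi2
          linarith
        · by_cases h2 : i + 1 = a + 1
          · have h2' : i = a := by omega
            subst h2'
            rw [Function.update_of_ne h1, Function.update_self]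
            linarith
          · rw [Function.update_of_ne h1, Function.update_of_ne h2]
            exact hmono i hi1 hi2
      · intro j hj1 hj2
        rw [Function.update_of_ne (by omega : j ≠ a + 1)]
        by_cases h : q = a + 1
        · rw [h, Function.update_self]
          have h5 : lam q ≤ lam j := htail j hj1 hj2
          rw [h] at h5
          linarith
        · rw [Function.update_of_ne h]
          exact htail j hj1 hj2
    have hza : z a ≤ z (a + 1) := by
      have e1 : q - (q - a) = a := by omega
      have hz' := hord (q - a) (by omega) (by omega)
      rw [e1] at hz'
      exact hz'
    have hzapos : 0 < z a := hz a hmema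
    nlinarith
  -- Claim 1
  have claim1 : ∀ i, q - r ≤ i → i ≤ q → lam i = lam q := by
    have block : ∀ d, d ≤ r → lam (q - d) = lam q := by
      intro d
      induction d with
      | zero => intro _; rfl
      | succ n ih =>
        intro hd
        have h1 : lam (q - (n + 1)) = lam (q - (n + 1) + 1) :=
          step (q - (n + 1)) (by omega) (by omega)
        have h2 : q - (n + 1) + 1 = q - n := by omega
        rw [h1, h2]
        exact ih (by omega)
    intro i h1 h2
    have e : q - (q - i) = i := by omega
    have := block (q - i) (by omega)
    rw [e] at this
    exact this
  refine ⟨claim1, ?_⟩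
  -- Claim 2
  intro c hcC hcmax
  have hcIcc := hCsub hcC
  rw [Finset.mem_Icc] at hcIcc
  have hmemc : c ∈ Finset.Icc 1 m := Finset.mem_Icc.mpr ⟨by omega, hcIcc.2⟩
  have hqc : lam q ≤ lam c := htail c (by omega) hcIcc.2
  by_contra hne
  have hlt2 : lam q < lam c := lt_of_le_of_ne hqc hne
  have hzc : 0 < z c := hz c hmemc
  -- push c down
  have hB : z c * lam c ≤ 1 := by
    apply min_left m q z lam hmin c hmemc (hpos c hmemc) (lam c - lam q) (by linarith)
    intro t ht1 ht2
    have ht1' : lam q < t := by linarith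
    refine ⟨?_, ?_, ?_⟩
    · intro i hi
      by_cases h : i = c
      · subst h; rw [Function.update_self]; linarith
      · rw [Function.update_of_ne h]; exact hpos i hi
    · intro i hi1 hi2
      rw [Function.update_of_ne (by omega : i ≠ c), Function.update_of_ne (by omega : i + 1 ≠ c)]
      exact hmono i hi1 hi2
    · intro j hj1 hj2
      rw [Function.update_of_ne (by omega : q ≠ c)]
      by_cases h : j = c
      · subst h; rw [Function.update_self]; linarith
      · rw [Function.update_of_ne h]; exact htail j hj1 hj2
  by_cases hS : ∀ j ∈ Finset.Icc (q + 1) m, lam q < lam j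
  · -- no tail coordinate is tight: push q up
    have hne2 : (Finset.Icc (q + 1) m).Nonempty := by
      refine ⟨q + 1, Finset.mem_Icc.mpr ⟨le_refl _, by omega⟩⟩
    set ε : ℝ := (Finset.Icc (q + 1) m).inf' hne2 (fun j => lam j - lam q) with hεdef
    have hεpos : 0 < ε := by
      rw [hεdef, Finset.lt_inf'_iff]
      intro j hj
      have := hS j hj
      linarith
    have hA : 1 ≤ z q * lam q := by
      apply min_right m q z lam hmin q hmemq hlamq ε hεpos
      intro t ht1 ht2
      refine ⟨?_, ?_, ?_⟩
      · intro i hi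
        by_cases h : i = q
        · subst h; rw [Function.update_self]; linarith
        · rw [Function.update_of_ne h]; exact hpos i hi
      · intro i hi1 hi2
        rw [Function.update_of_ne (by omega : i ≠ q)]
        by_cases h : i + 1 = q
        · rw [h, Function.update_self]
          have h3 : lam i ≤ lam q := by rw [← h]; exact hmono i hi1 (by omega)
          linarith
        · rw [Function.update_of_ne h]; exact hmono i hi1 hi2
      · intro j hj1 hj2
        rw [Function.update_self, Function.update_of_ne (by omega : j ≠ q)]
        have h4 : ε ≤ lam j - lam q := by
          rw [hεdef]
          exact Finset.inf'_le _ (Finset.mem_Icc.mpr ⟨by omega, hj2⟩)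
        linarith
    have hzq : z q ≤ z c := hCineq c hcC
    nlinarith
  · -- some tail coordinate j0 is tight: push j0 up
    push_neg at hS
    obtain ⟨j0, hj0mem, hj0le⟩ := hS
    rw [Finset.mem_Icc] at hj0mem
    have hj0eq : lam j0 = lam q :=
      le_antisymm hj0le (htail j0 (by omega) hj0mem.2)
    have hmemj0 : j0 ∈ Finset.Icc 1 m := Finset.mem_Icc.mpr ⟨by omega, hj0mem.2⟩
    have hA : 1 ≤ z j0 * lam j0 := by
      apply min_right m q z lam hmin j0 hmemj0 (hpos j0 hmemj0) 1 one_pos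
      intro t ht1 ht2
      refine ⟨?_, ?_, ?_⟩
      · intro i hi
        by_cases h : i = j0
        · subst h; rw [Function.update_self]; linarith [hpos i hi]
        · rw [Function.update_of_ne h]; exact hpos i hi
      · intro i hi1 hi2
        rw [Function.update_of_ne (by omega : i ≠ j0), Function.update_of_ne (by omega : i + 1 ≠ j0)]
        exact hmono i hi1 hi2
      · intro j hj1 hj2
        rw [Function.update_of_ne (by omega : q ≠ j0)]
        by_cases h : j = j0
        · subst h; rw [Function.update_self]
          linarith [htail j hj1 hj2]
        · rw [Function.update_of_ne h]; exact htail j hj1 hj2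
    have hzj0 : z j0 ≤ z c := by
      by_cases h : j0 ∈ C
      · exact hcmax j0 h
      · have := houtside j0 (by omega) hj0mem.2 h
        have := hCineq c hcC
        linarith
    rw [hj0eq] at hA
    nlinarith
end
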